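/- In the model with worlds {u} ∪ {v_i : i ≥ 2}, R u v_i for all i ≥ 2, e(v_i, x) = 1/2 + 1/i, e(v_i, y) = 1/2, the formula □(((x → y) → y) ∧ (y → x)) → ((□x → □y) → □y) evaluates at u to 1/2, hence is falsified (its value is strictly less than 1). -/

import Mathlib

/-- Gödel implication on the real unit interval (as reals). -/
noncomputable def gimp (x y : ℝ) : ℝ := if x ≤ y then 1 else y

/-- Gödel negation. -/
noncomputable def gneg (x : ℝ) : ℝ := gimp x 0
/-- Bi-modal formulas. -/
inductive MFm : Type where
  | var : ℕ → MFm
  | bot : MFm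
  | and : MFm → MFm → MFm
  | or : MFm → MFm → MFm
  | imp : MFm → MFm → MFm
  | box : MFm → MFm
  | dia : MFm → MFm

/-- Evaluation in a crisp Gödel-Kripke model: `□` is the infimum over
successors (`1` if there are none), `◇` the supremum (`0` if none). -/
noncomputable def ceval {W : Type} (R : W → W → Prop) (v : W → ℕ → ℝ) :
    MFm → W → ℝ
  | .var n, u => v u n
  | .bot, _ => 0
  | .and φ ψ, u => min (ceval R v φ u) (ceval R v ψ u)
  | .or φ ψ, u => max (ceval R v φ u) (ceval R v ψ u)
  | .imp φ ψ, u => gimp (ceval R v φ u) (ceval R v ψ u)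
  | .box φ, u => sInf ({x | ∃ w, R u w ∧ x = ceval R v φ w} ∪ {1})
  | .dia φ, u => sSup ({x | ∃ w, R u w ∧ x = ceval R v φ w} ∪ {0})

/-- A crisp model is witnessed if every `□`-infimum and `◇`-supremum is
attained at a successor (or equals the trivial value `1`, resp. `0`,
corresponding to a witness with `R`-value `0` in the valued reading). -/
def CWitnessed {W : Type} (R : W → W → Prop) (v : W → ℕ → ℝ) : Prop :=
  ∀ (φ : MFm) (u : W),
    (ceval R v (.box φ) u = 1 ∨
      ∃ w, R u w ∧ ceval R v φ w = ceval R v (.box φ) u) ∧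
    (ceval R v (.dia φ) u = 0 ∨
      ∃ w, R u w ∧ ceval R v φ w = ceval R v (.dia φ) u)

/-- in the same model, the formula
`□(((x→y)→y) ∧ (y→x)) → ((□x→□y)→□y)` evaluates to `1/2 < 1` at the root. -/
theorem wbox_falsified_in_unwitnessed_model :
    let R : ℕ → ℕ → Prop := fun a b => a = 0 ∧ 2 ≤ b
    let v : ℕ → ℕ → ℝ := fun a n => if n = 0 then 1/2 + 1/(a:ℝ) else 1/2
    let x : MFm := .var 0
    let y : MFm := .var 1
    let WBox : MFm :=
      .imp (.box (.and (.imp (.imp x y) y) (.imp y x)))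
           (.imp (.imp (.box x) (.box y)) (.box y))
    ceval R v WBox 0 = 1/2 ∧ ceval R v WBox 0 < 1 := by
  intro R v x y WBox
  have key : ceval R v WBox 0 = 1/2 := by
    -- □y at 0
    have hy : ceval R v (.box y) 0 = 1/2 := by
      have hset : {r | ∃ w, R 0 w ∧ r = ceval R v y w} ∪ {1} = ({1/2, 1} : Set ℝ) := by
        ext r
        simp only [Set.mem_union, Set.mem_setOf_eq, Set.mem_singleton_iff,
          Set.mem_insert_iff, ceval, v, R]
        constructor
        · rintro (⟨w, ⟨-, hw⟩, rfl⟩ | rfl) <;> simp [y, ceval]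
        · rintro (rfl | rfl)
          · exact Or.inl ⟨2, by norm_num [y, ceval]⟩
          · exact Or.inr rfl
      show sInf _ = 1/2
      rw [hset, csInf_pair]
      norm_num
    -- □x at 0
    have hx : ceval R v (.box x) 0 = 1/2 := by
      set S : Set ℝ := {r | ∃ w, R 0 w ∧ r = ceval R v x w} ∪ {1} with hS
      have hmem : ∀ n : ℕ, 2 ≤ n → (1/2 + 1/(n:ℝ)) ∈ S := by
        intro n hn
        exact Or.inl ⟨n, ⟨rfl, hn⟩, by simp [ceval, v, x]⟩
      have hne : S.Nonempty := ⟨1, Or.inr rfl⟩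
      have hlb : ∀ r ∈ S, (1/2:ℝ) ≤ r := by
        rintro r (⟨w, -, rfl⟩ | rfl)
        · simp only [ceval, v, x, if_pos rfl, ↓reduceIte]
          have : (0:ℝ) ≤ 1/(w:ℝ) := by positivity
          linarith
        · norm_num
      have hge : (1/2:ℝ) ≤ sInf S := le_csInf hne hlb
      have hle : sInf S ≤ 1/2 := by
        refine le_of_forall_pos_le_add ?_
        intro ε hε
        obtain ⟨n, hn⟩ := exists_nat_one_div_lt hε
        set m : ℕ := max 2 (n+1) with hm
        have h2m : 2 ≤ m := le_max_left _ _
        have hmpos : (0:ℝ) < m := by positivity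
        have hnm : (n:ℝ)+1 ≤ m := by exact_mod_cast le_max_right 2 (n+1)
        have h1m : 1/(m:ℝ) ≤ 1/((n:ℝ)+1) := by
          apply div_le_div_of_nonneg_left (by norm_num) (by positivity) hnm
        calc sInf S ≤ 1/2 + 1/(m:ℝ) := csInf_le ⟨1/2, hlb⟩ (hmem m h2m)
          _ ≤ 1/2 + 1/((n:ℝ)+1) := by linarith
          _ ≤ 1/2 + ε := by linarith
      show sInf _ = 1/2
      rw [← hS]
      linarith
    -- the box of the conjunction
    have hc : ceval R v (.box (.and (.imp (.imp x y) y) (.imp y x))) 0 = 1 := by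
      have hset : {r | ∃ w, R 0 w ∧ r = ceval R v (.and (.imp (.imp x y) y) (.imp y x)) w} ∪ {1}
          = ({1} : Set ℝ) := by
        ext r
        simp only [Set.mem_union, Set.mem_setOf_eq, Set.mem_singleton_iff]
        constructor
        · rintro (⟨w, ⟨-, hw⟩, rfl⟩ | rfl)
          · have hwpos : (0:ℝ) < 1/(w:ℝ) := by
              have : (0:ℝ) < w := by exact_mod_cast lt_of_lt_of_le (by norm_num) hw
              positivity
            have hxy : ¬ ((1:ℝ)/2 + 1/(w:ℝ) ≤ 1/2) := by linarith
            have ha : ceval R v x w = 1/2 + 1/(w:ℝ) := by simp [ceval, v, x]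
            have hb : ceval R v y w = 1/2 := by simp [ceval, v, y]
            show min (gimp (gimp (ceval R v x w) (ceval R v y w)) (ceval R v y w))
                (gimp (ceval R v y w) (ceval R v x w)) = 1
            rw [ha, hb]
            unfold gimp
            rw [if_neg hxy, if_pos (le_refl ((1:ℝ)/2)),
              if_pos (by linarith : (1:ℝ)/2 ≤ 1/2 + 1/(w:ℝ)), min_self]
          · rfl
        · rintro rfl; exact Or.inr rfl
      show sInf _ = 1
      rw [hset, csInf_singleton]
    show gimp _ (gimp (gimp (ceval R v (.box x) 0) (ceval R v (.box y) 0)) (ceval R v (.box y) 0)) = 1/2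
    rw [hx, hy, hc]
    unfold gimp
    norm_num
  exact ⟨key, by rw [key]; norm_num⟩
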